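/- The Friedkin–Johnsen model x(k+1) = ΛW x(k) + (I_n − Λ)u is exponentially stable, i.e. the matrix ΛW is Schur stable (ρ(ΛW) < 1), if and only if there are no oblivious agents, i.e. every agent i ∈ {1,…,n} is either stubborn or is connected by a walk in the interaction graph G[W] to some stubborn agent. -/

import Mathlib

open Matrix Finset

section Aux

variable {n : ℕ}

/-- entries of powers of an entrywise-nonnegative matrix are nonnegative -/
lemma fj_pow_nonneg (A : Matrix (Fin n) (Fin n) ℝ) (hA0 : ∀ i j, 0 ≤ A i j) :
    ∀ (k : ℕ) (i j), 0 ≤ (A ^ k) i j := by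
  intro k
  induction k with
  | zero => intro i j; simp [Matrix.one_apply]; positivity
  | succ k ih =>
    intro i j
    rw [pow_succ, Matrix.mul_apply]
    exact Finset.sum_nonneg fun m _ => mul_nonneg (ih i m) (hA0 m j)

lemma fj_rowsum_succ (A : Matrix (Fin n) (Fin n) ℝ) (k : ℕ) (i : Fin n) :
    ∑ j, (A ^ (k + 1)) i j = ∑ m, A i m * ∑ j, (A ^ k) m j := by
  rw [pow_succ']
  simp_rw [Matrix.mul_apply, Finset.mul_sum]
  exact Finset.sum_comm

lemma fj_rowsum_le_one (A : Matrix (Fin n) (Fin n) ℝ) (lam : Fin n → ℝ)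
    (hA0 : ∀ i j, 0 ≤ A i j) (hAr : ∀ i, ∑ j, A i j = lam i)
    (hlam : ∀ i, 0 ≤ lam i ∧ lam i ≤ 1) :
    ∀ (k : ℕ) (i), ∑ j, (A ^ k) i j ≤ 1 := by
  intro k
  induction k with
  | zero => intro i; simp [Matrix.one_apply]
  | succ k ih =>
    intro i
    rw [fj_rowsum_succ]
    calc ∑ m, A i m * ∑ j, (A ^ k) m j ≤ ∑ m, A i m * 1 :=
          Finset.sum_le_sum fun m _ => mul_le_mul_of_nonneg_left (ih m) (hA0 i m)
      _ = lam i := by simpa using hAr i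
      _ ≤ 1 := (hlam i).2

lemma fj_rowsum_anti (A : Matrix (Fin n) (Fin n) ℝ) (lam : Fin n → ℝ)
    (hA0 : ∀ i j, 0 ≤ A i j) (hAr : ∀ i, ∑ j, A i j = lam i)
    (hlam : ∀ i, 0 ≤ lam i ∧ lam i ≤ 1) :
    ∀ (k : ℕ) (i), ∑ j, (A ^ (k + 1)) i j ≤ ∑ j, (A ^ k) i j := by
  intro k
  induction k with
  | zero =>
    intro i
    simp only [zero_add, pow_one, pow_zero]
    calc ∑ j, A i j = lam i := hAr i
      _ ≤ 1 := (hlam i).2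
      _ = ∑ j, (1 : Matrix (Fin n) (Fin n) ℝ) i j := by simp [Matrix.one_apply]
  | succ k ih =>
    intro i
    rw [fj_rowsum_succ, fj_rowsum_succ]
    exact Finset.sum_le_sum fun m _ => mul_le_mul_of_nonneg_left (ih m) (hA0 i m)

lemma fj_rowsum_mono (A : Matrix (Fin n) (Fin n) ℝ) (lam : Fin n → ℝ)
    (hA0 : ∀ i j, 0 ≤ A i j) (hAr : ∀ i, ∑ j, A i j = lam i)
    (hlam : ∀ i, 0 ≤ lam i ∧ lam i ≤ 1) {k l : ℕ} (hkl : k ≤ l) (i : Fin n) :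
    ∑ j, (A ^ l) i j ≤ ∑ j, (A ^ k) i j := by
  induction l with
  | zero => simpa [Nat.le_zero.mp hkl] using le_refl _
  | succ l ih =>
    rcases Nat.lt_or_ge k (l + 1) with h | h
    · exact le_trans (fj_rowsum_anti A lam hA0 hAr hlam l i) (ih (Nat.lt_succ_iff.mp h))
    · have : k = l + 1 := le_antisymm hkl h
      simp [this]

/-- eigenvalue extraction + Gershgorin-type bound for powers -/
lemma fj_spec_pow_le (hn : 0 < n) (A : Matrix (Fin n) (Fin n) ℝ)
    (hA0 : ∀ i j, 0 ≤ A i j) (K : ℕ) (c : ℝ)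
    (hc : ∀ i, ∑ j, (A ^ K) i j ≤ c) :
    ∀ z ∈ spectrum ℂ (A.map (algebraMap ℝ ℂ)), ‖z‖ ^ K ≤ c := by
  intro z hz
  set B := A.map (algebraMap ℝ ℂ) with hB
  rw [spectrum.mem_iff] at hz
  rw [Matrix.isUnit_iff_isUnit_det, isUnit_iff_ne_zero, not_not] at hz
  obtain ⟨v, hv0, hv⟩ := (Matrix.exists_mulVec_eq_zero_iff.mpr hz)
  have hev : B.mulVec v = z • v := by
    have : (algebraMap ℂ (Matrix (Fin n) (Fin n) ℂ) z) = z • 1 :=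
      Algebra.algebraMap_eq_smul_one z
    rw [this] at hv
    rw [Matrix.sub_mulVec, sub_eq_zero] at hv
    rw [← hv, Matrix.smul_mulVec, Matrix.one_mulVec]
  -- powers
  have hevk : (B ^ K).mulVec v = z ^ K • v := by
    clear hc
    induction K with
    | zero => simp [Matrix.one_mulVec]
    | succ k ih =>
      rw [pow_succ', ← Matrix.mulVec_mulVec, ih, Matrix.mulVec_smul, hev,
        smul_smul, ← pow_succ]
  -- B ^ K = (A ^ K).map
  have hBK : B ^ K = (A ^ K).map (algebraMap ℝ ℂ) := by
    simp only [hB, ← RingHom.mapMatrix_apply, ← map_pow]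
  -- argmax
  obtain ⟨a, -, ha⟩ := Finset.exists_max_image Finset.univ (fun b => ‖v b‖)
    (Finset.univ_nonempty_iff.mpr ⟨⟨0, hn⟩⟩)
  have hva : 0 < ‖v a‖ := by
    obtain ⟨b, hb⟩ := Function.ne_iff.mp hv0
    exact lt_of_lt_of_le (norm_pos_iff.mpr hb) (ha b (Finset.mem_univ b))
  have key : ‖z‖ ^ K * ‖v a‖ ≤ c * ‖v a‖ := by
    have h1 : (z ^ K) * v a = ∑ j, ((A ^ K) a j : ℂ) * v j := by
      have := congrFun hevk a
      simp only [Matrix.mulVec, dotProduct, Pi.smul_apply, smul_eq_mul] at this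
      rw [← this, hBK]
      simp [Matrix.map_apply]
    calc ‖z‖ ^ K * ‖v a‖ = ‖(z ^ K) * v a‖ := by rw [norm_mul, norm_pow]
      _ = ‖∑ j, ((A ^ K) a j : ℂ) * v j‖ := by rw [h1]
      _ ≤ ∑ j, ‖((A ^ K) a j : ℂ) * v j‖ := norm_sum_le _ _
      _ = ∑ j, (A ^ K) a j * ‖v j‖ := by
          refine Finset.sum_congr rfl fun j _ => ?_
          rw [norm_mul, Complex.norm_real, Real.norm_of_nonneg (fj_pow_nonneg A hA0 K a j)]
      _ ≤ ∑ j, (A ^ K) a j * ‖v a‖ :=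
          Finset.sum_le_sum fun j _ => mul_le_mul_of_nonneg_left (ha j (Finset.mem_univ j))
            (fj_pow_nonneg A hA0 K a j)
      _ = (∑ j, (A ^ K) a j) * ‖v a‖ := by rw [Finset.sum_mul]
      _ ≤ c * ‖v a‖ := mul_le_mul_of_nonneg_right (hc a) (le_of_lt hva)
  exact le_of_mul_le_mul_right key hva


lemma fj_step (A : Matrix (Fin n) (Fin n) ℝ) (W : Matrix (Fin n) (Fin n) ℝ) (lam : Fin n → ℝ)
    (hA : ∀ a b, A a b = lam a * W a b)
    (hW0 : ∀ i j, 0 ≤ W i j)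
    (hA0 : ∀ i j, 0 ≤ A i j) (hAr : ∀ i, ∑ j, A i j = lam i)
    (hlam : ∀ i, 0 ≤ lam i ∧ lam i ≤ 1)
    {i' j' : Fin n} {k : ℕ} (hij : 0 < W i' j') (hsj : ∑ j, (A ^ k) j' j < 1) :
    ∑ j, (A ^ (k + 1)) i' j < 1 := by
  rw [fj_rowsum_succ]
  rcases lt_or_ge (lam i') 1 with h1 | h1
  · calc ∑ m, A i' m * ∑ j, (A ^ k) m j ≤ ∑ m, A i' m * 1 :=
        Finset.sum_le_sum fun m _ => mul_le_mul_of_nonneg_left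
          (fj_rowsum_le_one A lam hA0 hAr hlam k m) (hA0 i' m)
      _ = lam i' := by simpa using hAr i'
      _ < 1 := h1
  · have hli : lam i' = 1 := le_antisymm (hlam i').2 h1
    have hAij : 0 < A i' j' := by rw [hA, hli, one_mul]; exact hij
    have hlt : ∑ m, A i' m * ∑ j, (A ^ k) m j < ∑ m, A i' m * 1 :=
      Finset.sum_lt_sum (fun m _ => mul_le_mul_of_nonneg_left
        (fj_rowsum_le_one A lam hA0 hAr hlam k m) (hA0 i' m))
        ⟨j', Finset.mem_univ j', mul_lt_mul_of_pos_left hsj hAij⟩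
    have heq : ∑ m, A i' m * 1 = lam i' := by simpa using hAr i'
    rw [heq, hli] at hlt
    exact hlt

/-- if agent `i` is oblivious then `1` is a complex eigenvalue of `ΛW`. -/
lemma fj_one_mem_spectrum {n : ℕ} (W : Matrix (Fin n) (Fin n) ℝ) (lam : Fin n → ℝ)
    (hW0 : ∀ i j, 0 ≤ W i j) (hW1 : ∀ i, ∑ j, W i j = 1)
    (hlam : ∀ i, 0 ≤ lam i ∧ lam i ≤ 1) (i : Fin n)
    (hi1 : ¬ lam i < 1)
    (hno : ∀ j, lam j < 1 → ¬ Relation.TransGen (fun a b => 0 < W a b) i j) :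
    (1 : ℂ) ∈ spectrum ℂ ((Matrix.diagonal lam * W).map (algebraMap ℝ ℂ)) := by
  classical
  set A := Matrix.diagonal lam * W with hAdef
  have hA : ∀ a b, A a b = lam a * W a b := fun a b => Matrix.diagonal_mul lam W a b
  set p : Fin n → Prop := fun a => a = i ∨ Relation.TransGen (fun a b => 0 < W a b) i a
    with hp
  have hlam1 : ∀ a, p a → lam a = 1 := by
    rintro a (rfl | ht)
    · exact le_antisymm (hlam a).2 (not_lt.mp hi1)
    · by_contra hne
      exact hno a (lt_of_le_of_ne (hlam a).2 hne) ht
  have hclosed : ∀ a b, p a → 0 < W a b → p b := by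
    rintro a b (rfl | ht) hw
    · exact Or.inr (Relation.TransGen.single hw)
    · exact Or.inr (ht.tail hw)
  have hArow : ∀ a b, p a → ¬ p b → A a b = 0 := by
    intro a b hpa hpb
    rw [hA]
    have : W a b = 0 := by
      by_contra hne
      exact hpb (hclosed a b hpa (lt_of_le_of_ne (hW0 a b) (Ne.symm hne)))
    rw [this, mul_zero]
  set B := A.map (algebraMap ℝ ℂ) with hBdef
  have hBrow : ∀ a, p a → ∑ b, B a b = 1 := by
    intro a hpa
    have : ∑ b, A a b = 1 := by
      have := hW1 a
      simp_rw [hA, ← Finset.mul_sum, this, mul_one]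
      exact hlam1 a hpa
    simp only [hBdef, Matrix.map_apply]
    rw [← map_sum, this, _root_.map_one]
  set M : Matrix (Fin n) (Fin n) ℂ := 1 - B with hMdef
  set e : {a // p a} ⊕ {a // ¬ p a} ≃ Fin n := Equiv.sumCompl p with he
  -- det M = 0
  have hdet : M.det = 0 := by
    rw [← Matrix.det_submatrix_equiv_self e M]
    rw [← Matrix.fromBlocks_toBlocks (M.submatrix e e)]
    have h12 : (M.submatrix e e).toBlocks₁₂ = 0 := by
      ext s t
      simp only [Matrix.toBlocks₁₂, Matrix.of_apply, Matrix.submatrix_apply]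
      have h1 : e (Sum.inl s) = (s : Fin n) := rfl
      have h2 : e (Sum.inr t) = (t : Fin n) := rfl
      show M (e (Sum.inl s)) (e (Sum.inr t)) = 0
      rw [h1, h2, hMdef]
      have hne : (s : Fin n) ≠ (t : Fin n) := by
        intro hc
        exact t.2 (hc ▸ s.2)
      have hB0 : B (s : Fin n) (t : Fin n) = 0 := by
        simp only [hBdef, Matrix.map_apply, hArow _ _ s.2 t.2, map_zero]
      simp [Matrix.sub_apply, Matrix.one_apply_ne hne, hB0]
    rw [h12, Matrix.det_fromBlocks_zero₁₂]
    have h11 : ((M.submatrix e e).toBlocks₁₁).det = 0 := by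
      haveI : Nonempty {a // p a} := ⟨⟨i, Or.inl rfl⟩⟩
      rw [← Matrix.exists_mulVec_eq_zero_iff]
      refine ⟨fun _ => 1, ?_, ?_⟩
      · intro hc
        exact one_ne_zero (congrFun hc (Classical.arbitrary _))
      · funext s
        simp only [Matrix.mulVec, dotProduct, Matrix.toBlocks₁₁, Matrix.of_apply,
          Matrix.submatrix_apply, mul_one, Pi.zero_apply]
        have hrow : ∀ t : {a // p a}, M (e (Sum.inl s)) (e (Sum.inl t)) = M (s : Fin n) (t : Fin n) := by
          intro t; rfl
        show ∑ t : {a // p a}, M (e (Sum.inl s)) (e (Sum.inl t)) = 0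
        simp_rw [hrow]
        -- sum over the subtype equals the full sum since M vanishes on complement columns
        have hfull : ∑ b : Fin n, M (s : Fin n) b = 0 := by
          rw [hMdef]
          simp only [Matrix.sub_apply]
          rw [Finset.sum_sub_distrib, hBrow _ s.2]
          simp [Matrix.one_apply]
        have hsplit : ∑ b : Fin n, M (s : Fin n) b
            = ∑ t : {a // p a}, M (s : Fin n) (t : Fin n)
              + ∑ t : {a // ¬ p a}, M (s : Fin n) (t : Fin n) := by
          rw [← Equiv.sum_comp e (fun b => M (s : Fin n) b), Fintype.sum_sum_type]
          rfl
        have hzero : ∑ t : {a // ¬ p a}, M (s : Fin n) (t : Fin n) = 0 := by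
          refine Finset.sum_eq_zero fun t _ => ?_
          have hne : (s : Fin n) ≠ (t : Fin n) := fun hc => t.2 (hc ▸ s.2)
          have hB0 : B (s : Fin n) (t : Fin n) = 0 := by
            simp only [hBdef, Matrix.map_apply, hArow _ _ s.2 t.2, map_zero]
          simp [hMdef, Matrix.sub_apply, Matrix.one_apply_ne hne, hB0]
        rw [hsplit, hzero, add_zero] at hfull
        exact hfull
    rw [h11, zero_mul]
  rw [spectrum.mem_iff, _root_.map_one]
  rw [Matrix.isUnit_iff_isUnit_det]
  rw [show (1 : Matrix (Fin n) (Fin n) ℂ) - B = M from rfl, hdet]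
  simp


end Aux

/-- Spectral radius of a real matrix: the supremum of moduli of its complex eigenvalues. -/
noncomputable def specRad {ι : Type*} [Fintype ι] [DecidableEq ι] (A : Matrix ι ι ℝ) : ℝ :=
  sSup ((fun z : ℂ => ‖z‖) '' spectrum ℂ (A.map (algebraMap ℝ ℂ)))

/-- the FJ model is exponentially stable, i.e. ρ(ΛW) < 1, iff there are no
oblivious agents: every agent is stubborn (λ_ii < 1) or connected by a walk in the
interaction graph G[W] (arc (i,j) iff w_ij > 0) to some stubborn agent. -/
theorem fj_stability_iff_no_oblivious {n : ℕ} (W : Matrix (Fin n) (Fin n) ℝ)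
    (lam : Fin n → ℝ)
    (hW0 : ∀ i j, 0 ≤ W i j) (hW1 : ∀ i, ∑ j, W i j = 1)
    (hlam : ∀ i, 0 ≤ lam i ∧ lam i ≤ 1) :
    specRad (Matrix.diagonal lam * W) < 1 ↔
      ∀ i : Fin n, lam i < 1 ∨
        ∃ j : Fin n, lam j < 1 ∧ Relation.TransGen (fun a b => 0 < W a b) i j := by
  classical
  set A := Matrix.diagonal lam * W with hAdef
  have hA : ∀ a b, A a b = lam a * W a b := fun a b => Matrix.diagonal_mul lam W a b
  have hA0 : ∀ a b, 0 ≤ A a b := fun a b => by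
    rw [hA]; exact mul_nonneg (hlam a).1 (hW0 a b)
  have hAr : ∀ a, ∑ b, A a b = lam a := by
    intro a
    simp_rw [hA, ← Finset.mul_sum, hW1 a, mul_one]
  constructor
  · intro hρ i
    by_contra hcon
    push_neg at hcon
    obtain ⟨hi1, hno⟩ := hcon
    have hn : 0 < n := i.pos
    have hmem := fj_one_mem_spectrum W lam hW0 hW1 hlam i (not_lt.mpr hi1) hno
    have hbdd : BddAbove ((fun z : ℂ => ‖z‖) '' spectrum ℂ (A.map (algebraMap ℝ ℂ))) := by
      refine ⟨1, ?_⟩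
      rintro x ⟨z, hz, rfl⟩
      have := fj_spec_pow_le hn A hA0 1 1 (fun a => by
        rw [pow_one, hAr]; exact (hlam a).2) z hz
      simpa using this
    have h1 : (1 : ℝ) ≤ specRad A := by
      refine le_csSup hbdd ⟨1, hmem, ?_⟩
      simp
    rw [hAdef] at hρ
    linarith
  · intro h
    rcases Nat.eq_zero_or_pos n with hn | hn
    · subst hn
      haveI : Subsingleton (Matrix (Fin 0) (Fin 0) ℂ) :=
        ⟨fun M N => by ext i j; exact i.elim0⟩
      have hemp : spectrum ℂ ((Matrix.diagonal lam * W).map (algebraMap ℝ ℂ)) = ∅ :=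
        Set.eq_empty_of_forall_notMem fun z hz =>
          (spectrum.mem_iff.mp hz) (isUnit_of_subsingleton _)
      rw [specRad, hemp]
      simp [Real.sSup_empty]
    · -- no oblivious agents: find uniform K with all row sums of A^K < 1
      have hreach : ∀ i : Fin n, ∃ k, 0 < k ∧ ∑ j, (A ^ k) i j < 1 := by
        intro i
        rcases h i with hi | ⟨j, hj, ht⟩
        · exact ⟨1, one_pos, by rw [pow_one, hAr]; exact hi⟩
        · have hsj : ∑ b, (A ^ 1) j b < 1 := by rw [pow_one, hAr]; exact hj
          induction ht using Relation.TransGen.head_induction_on with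
          | single hab =>
            exact ⟨2, two_pos, fj_step A W lam hA hW0 hA0 hAr hlam hab hsj⟩
          | head hab _ ihp =>
            obtain ⟨k, hk, hks⟩ := ihp
            exact ⟨k + 1, Nat.succ_pos k, fj_step A W lam hA hW0 hA0 hAr hlam hab hks⟩
      choose f hf1 hf2 using hreach
      set K : ℕ := 1 + Finset.univ.sup f with hK
      have hK0 : 0 < K := Nat.lt_of_lt_of_le one_pos (Nat.le_add_right 1 _)
      have hKs : ∀ i, ∑ j, (A ^ K) i j < 1 := by
        intro i
        have hle : f i ≤ K := le_trans (Finset.le_sup (Finset.mem_univ i)) (Nat.le_add_left _ 1)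
        exact lt_of_le_of_lt (fj_rowsum_mono A lam hA0 hAr hlam hle i) (hf2 i)
      haveI : Nonempty (Fin n) := ⟨⟨0, hn⟩⟩
      set c : ℝ := Finset.univ.sup' Finset.univ_nonempty (fun i => ∑ j, (A ^ K) i j) with hc
      have hcle : ∀ i, ∑ j, (A ^ K) i j ≤ c := fun i =>
        Finset.le_sup' (fun i => ∑ j, (A ^ K) i j) (Finset.mem_univ i)
      have hc1 : c < 1 := (Finset.sup'_lt_iff Finset.univ_nonempty).mpr fun i _ => hKs i
      have hc0 : 0 ≤ c := le_trans
        (Finset.sum_nonneg fun j _ => fj_pow_nonneg A hA0 K (Classical.arbitrary _) j)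
        (hcle _)
      set d : ℝ := c ^ ((K : ℝ)⁻¹) with hd
      have hd1 : d < 1 := Real.rpow_lt_one hc0 hc1 (by positivity)
      have hd0 : 0 ≤ d := Real.rpow_nonneg hc0 _
      have hbound : ∀ x ∈ (fun z : ℂ => ‖z‖) '' spectrum ℂ (A.map (algebraMap ℝ ℂ)), x ≤ d := by
        rintro x ⟨z, hz, rfl⟩
        have hzK : ‖z‖ ^ K ≤ c := fj_spec_pow_le hn A hA0 K c hcle z hz
        have h1 : ‖z‖ = (‖z‖ ^ K) ^ ((K : ℝ)⁻¹) :=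
          (Real.pow_rpow_inv_natCast (norm_nonneg z) hK0.ne').symm
        show ‖z‖ ≤ d
        rw [h1, hd]
        exact Real.rpow_le_rpow (by positivity) hzK (by positivity)
      calc specRad A ≤ d := Real.sSup_le hbound hd0
        _ < 1 := hd1
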